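/- Fix real numbers q > 1, θ ≥ 0, and c ∈ (0,1). With k_N := ⌊cN⌋ and Z_{q,N}(θ) := ∑_{k=0}^{N} C(N,k) (1+(q−1)θk)^{−1/(q−1)}, one has lim_{N→∞} (1/N) · ln( C(N,k_N) · (1+(q−1)θ k_N)^{−1/(q−1)} / Z_{q,N}(θ) ) = H_b(c) − ln 2. That is, the probability that the q-exponential Erdős–Rényi model produces link density c decays exponentially with rate function I(c) = H_b(1/2) − H_b(c). -/

import Mathlib

open Finset Filter

/-- The binary entropy `H_b(c) = -c ln c - (1-c) ln(1-c)`. -/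
noncomputable def Hb (c : ℝ) : ℝ := -(c * Real.log c) - (1 - c) * Real.log (1 - c)

lemma helper_log (a : ℝ) (ha : 0 ≤ a) :
    Tendsto (fun N : ℕ => Real.log (1 + a * N) / N) atTop (nhds 0) := by
  rcases eq_or_lt_of_le ha with h | h
  · simp [← h]
  · have h1 : Tendsto (fun x : ℝ => 1 + a * x) atTop atTop :=
      tendsto_atTop_add_const_left _ _ (tendsto_id.const_mul_atTop h)
    have hO : (fun x : ℝ => 1 + a * x) =O[atTop] fun x => x := by
      apply Asymptotics.IsBigO.of_bound (a + 1)
      filter_upwards [eventually_ge_atTop 1] with x hx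
      rw [Real.norm_eq_abs, Real.norm_eq_abs, abs_of_nonneg (by nlinarith),
        abs_of_nonneg (by linarith)]
      nlinarith
    have h2 : (fun x : ℝ => Real.log (1 + a * x)) =o[atTop] (fun x : ℝ => x) := by
      have := (Real.isLittleO_log_id_atTop.comp_tendsto h1).trans_isBigO hO
      simpa [Function.comp_def] using this
    exact (h2.tendsto_div_nhds_zero).comp tendsto_natCast_atTop_atTop


section choosebounds
variable {N k : ℕ}

lemma nat_ratio_up (hk : k ≤ N) {j : ℕ} (hj : j + 1 ≤ k) :
    N.choose j * (N - k) ≤ N.choose (j + 1) * k := by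
  have h := Nat.choose_succ_right_eq N j
  have hjN : j ≤ N := le_trans (by omega) hk
  have key : (N - k) * (j + 1) ≤ (N - j) * k := by
    zify [hk, hjN]; nlinarith [hj, hk]
  have : N.choose j * (N - k) * (j + 1) ≤ N.choose (j + 1) * k * (j + 1) := by
    calc N.choose j * (N - k) * (j + 1) = N.choose j * ((N - k) * (j + 1)) := by ring
    _ ≤ N.choose j * ((N - j) * k) := Nat.mul_le_mul_left _ key
    _ = N.choose j * (N - j) * k := by ring
    _ = N.choose (j + 1) * (j + 1) * k := by rw [← h]
    _ = N.choose (j + 1) * k * (j + 1) := by ring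
  exact Nat.le_of_mul_le_mul_right this (Nat.succ_pos j)

lemma nat_ratio_down (hk : k ≤ N) {j : ℕ} (hj : k ≤ j) (hjN : j < N) :
    N.choose (j + 1) * k ≤ N.choose j * (N - k) := by
  have h := Nat.choose_succ_right_eq N j
  have key : (N - j) * k ≤ (N - k) * (j + 1) := by
    zify [hk, le_of_lt hjN]; nlinarith [hj, hk]
  have : N.choose (j + 1) * k * (j + 1) ≤ N.choose j * (N - k) * (j + 1) := by
    calc N.choose (j + 1) * k * (j + 1) = N.choose (j + 1) * (j + 1) * k := by ring
    _ = N.choose j * (N - j) * k := by rw [h]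
    _ = N.choose j * ((N - j) * k) := by ring
    _ ≤ N.choose j * ((N - k) * (j + 1)) := Nat.mul_le_mul_left _ key
    _ = N.choose j * (N - k) * (j + 1) := by ring
  exact Nat.le_of_mul_le_mul_right this (Nat.succ_pos j)

end choosebounds

lemma log_choose_bounds (N k : ℕ) (h0 : 0 < k) (hkN : k < N) :
    Real.log (N.choose k) ≤ N * Hb ((k:ℝ)/N) ∧
      N * Hb ((k:ℝ)/N) - Real.log (N+1) ≤ Real.log (N.choose k) := by
  have hN : (0:ℝ) < N := by
    have : 0 < N := lt_trans h0 hkN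
    exact_mod_cast this
  obtain ⟨p, hp⟩ : ∃ p : ℝ, p = (k:ℝ)/N := ⟨_, rfl⟩
  rw [← hp]
  have hp0 : 0 < p := by rw [hp]; positivity
  have hp1 : p < 1 := by
    rw [hp, div_lt_one hN]; exact_mod_cast hkN
  have h1p : 1 - p = ((N:ℝ) - k)/N := by rw [hp]; field_simp
  set t : ℕ → ℝ := fun j => (N.choose j : ℝ) * p^j * (1-p)^(N-j) with ht
  have tnonneg : ∀ j, 0 ≤ t j := fun j => by
    apply mul_nonneg (mul_nonneg (Nat.cast_nonneg _) (pow_nonneg hp0.le _))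
    exact pow_nonneg (by linarith) _
  have cast_up : ∀ j, j + 1 ≤ k → (N.choose j : ℝ) * (1-p) ≤ (N.choose (j+1) : ℝ) * p := by
    intro j hj
    have hnat := nat_ratio_up (le_of_lt hkN) hj
    have hc : ((N.choose j : ℝ)) * ((N:ℝ) - k) ≤ ((N.choose (j+1) : ℝ)) * k := by
      have := (Nat.cast_le (α := ℝ)).mpr hnat
      push_cast [Nat.cast_sub (le_of_lt hkN)] at this
      linarith
    rw [h1p, hp, mul_div_assoc', mul_div_assoc', div_le_div_iff₀ hN hN]
    nlinarith [hN.le]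
  have cast_down : ∀ j, k ≤ j → j < N → (N.choose (j+1) : ℝ) * p ≤ (N.choose j : ℝ) * (1-p) := by
    intro j hj hjN
    have hnat := nat_ratio_down (le_of_lt hkN) hj hjN
    have hc : ((N.choose (j+1) : ℝ)) * k ≤ ((N.choose j : ℝ)) * ((N:ℝ) - k) := by
      have := (Nat.cast_le (α := ℝ)).mpr hnat
      push_cast [Nat.cast_sub (le_of_lt hkN)] at this
      linarith
    rw [h1p, hp, mul_div_assoc', mul_div_assoc', div_le_div_iff₀ hN hN]
    nlinarith [hN.le]
  have step_up : ∀ j, j + 1 ≤ k → t j ≤ t (j+1) := by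
    intro j hj
    have e1 : N - j = (N - (j+1)) + 1 := by omega
    have e2 : t j = ((N.choose j : ℝ) * (1-p)) * (p^j * (1-p)^(N-(j+1))) := by
      simp only [ht, e1, pow_succ]; ring
    have e3 : t (j+1) = ((N.choose (j+1) : ℝ) * p) * (p^j * (1-p)^(N-(j+1))) := by
      simp only [ht, pow_succ]; ring
    rw [e2, e3]
    apply mul_le_mul_of_nonneg_right (cast_up j hj)
    exact mul_nonneg (pow_nonneg hp0.le _) (pow_nonneg (by linarith) _)
  have step_down : ∀ j, k ≤ j → j < N → t (j+1) ≤ t j := by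
    intro j hj hjN
    have e1 : N - j = (N - (j+1)) + 1 := by omega
    have e2 : t j = ((N.choose j : ℝ) * (1-p)) * (p^j * (1-p)^(N-(j+1))) := by
      simp only [ht, e1, pow_succ]; ring
    have e3 : t (j+1) = ((N.choose (j+1) : ℝ) * p) * (p^j * (1-p)^(N-(j+1))) := by
      simp only [ht, pow_succ]; ring
    rw [e2, e3]
    apply mul_le_mul_of_nonneg_right (cast_down j hj hjN)
    exact mul_nonneg (pow_nonneg hp0.le _) (pow_nonneg (by linarith) _)
  have up : ∀ i, i ≤ k → t (k - i) ≤ t k := by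
    intro i
    induction i with
    | zero => simp
    | succ n ih =>
      intro h
      have h1 : k - (n+1) + 1 = k - n := by omega
      calc t (k-(n+1)) ≤ t (k-(n+1)+1) := step_up _ (by omega)
        _ = t (k-n) := by rw [h1]
        _ ≤ t k := ih (by omega)
  have down : ∀ i, k + i ≤ N → t (k + i) ≤ t k := by
    intro i
    induction i with
    | zero => simp
    | succ n ih =>
      intro h
      calc t (k+(n+1)) = t ((k+n)+1) := by ring_nf
        _ ≤ t (k+n) := step_down _ (by omega) (by omega)
        _ ≤ t k := ih (by omega)
  have tmax : ∀ j ∈ range (N+1), t j ≤ t k := by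
    intro j hj
    rw [mem_range] at hj
    rcases le_or_gt j k with h | h
    · have := up (k - j) (by omega)
      rwa [Nat.sub_sub_self h] at this
    · have := down (j - k) (by omega)
      rwa [Nat.add_sub_cancel' (le_of_lt h)] at this
  have hsum : ∑ j ∈ range (N+1), t j = 1 := by
    calc ∑ j ∈ range (N+1), t j
        = ∑ j ∈ range (N+1), p^j * (1-p)^(N-j) * (N.choose j : ℝ) :=
          Finset.sum_congr rfl fun j _ => by simp only [ht]; ring
      _ = (p + (1-p))^N := (add_pow p (1-p) N).symm
      _ = 1 := by rw [show p + (1-p) = (1:ℝ) by ring, one_pow]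
  have htk_le : t k ≤ 1 := by
    rw [← hsum]
    exact Finset.single_le_sum (fun j _ => tnonneg j) (by rw [mem_range]; omega)
  have htk_ge : 1 / ((N:ℝ)+1) ≤ t k := by
    have h1 : (1:ℝ) ≤ (N+1) * t k := by
      calc (1:ℝ) = ∑ j ∈ range (N+1), t j := hsum.symm
        _ ≤ ∑ _j ∈ range (N+1), t k := Finset.sum_le_sum tmax
        _ = (N+1) * t k := by rw [Finset.sum_const, card_range]; push_cast; ring
    rw [div_le_iff₀ (by positivity)]
    linarith
  have htk_pos : 0 < t k := lt_of_lt_of_le (by positivity) htk_ge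
  -- log computation
  have hC : (0:ℝ) < N.choose k := by
    exact_mod_cast Nat.choose_pos (le_of_lt hkN)
  have hlogt : Real.log (t k) = Real.log (N.choose k) - N * Hb p := by
    rw [ht]
    have hpk : p ^ k ≠ 0 := (pow_pos hp0 k).ne'
    have h1pk : (1-p) ^ (N-k) ≠ 0 := (pow_pos (by linarith : (0:ℝ) < 1-p) _).ne'
    rw [Real.log_mul (mul_ne_zero hC.ne' hpk) h1pk, Real.log_mul hC.ne' hpk,
      Real.log_pow, Real.log_pow]
    have e1 : (N:ℝ) * p = k := by rw [hp]; field_simp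
    have e2 : (N:ℝ) * (1-p) = (N:ℝ) - k := by rw [hp]; field_simp
    have e3 : ((N - k : ℕ) : ℝ) = (N:ℝ) - k := by
      push_cast [Nat.cast_sub (le_of_lt hkN)]; ring
    simp only [Hb]
    rw [e3]
    linear_combination (Real.log (1-p) - Real.log p) * e1
  have hub : Real.log (t k) ≤ 0 := Real.log_nonpos htk_pos.le htk_le
  have hlb : -Real.log ((N:ℝ)+1) ≤ Real.log (t k) := by
    have := Real.log_le_log (by positivity) htk_ge
    rwa [Real.log_div one_ne_zero (by positivity), Real.log_one, zero_sub] at this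
  constructor
  · have : Real.log (N.choose k) - N * Hb p ≤ 0 := hlogt ▸ hub
    linarith
  · have : -Real.log ((N:ℝ)+1) ≤ Real.log (N.choose k) - N * Hb p := hlogt ▸ hlb
    push_cast
    linarith

/-- Large deviation principle at fixed `q > 1`, `θ ≥ 0` and link density `c ∈ (0,1)`:
with `k_N = ⌊cN⌋` and `Z_{q,N}(θ) = ∑_{k=0}^N C(N,k) (1+(q-1)θk)^(-1/(q-1))`,
`lim_{N→∞} (1/N) ln(C(N,k_N) (1+(q-1)θ k_N)^(-1/(q-1)) / Z_{q,N}(θ)) = H_b(c) - ln 2`,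
i.e. the probability of link density `c` decays with rate `I(c) = H_b(1/2) - H_b(c)`. -/
theorem qER_large_deviations (q θ c : ℝ) (hq : 1 < q) (hθ : 0 ≤ θ)
    (hc : c ∈ Set.Ioo (0 : ℝ) 1) :
    Tendsto (fun N : ℕ =>
        (1 / (N : ℝ)) * Real.log
          ((N.choose ⌊c * (N : ℝ)⌋₊ : ℝ) *
              (1 + (q - 1) * θ * (⌊c * (N : ℝ)⌋₊ : ℝ)) ^ (-(1 : ℝ) / (q - 1)) /
            (∑ k ∈ range (N + 1),
              (N.choose k : ℝ) * (1 + (q - 1) * θ * (k : ℝ)) ^ (-(1 : ℝ) / (q - 1)))))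
      atTop (nhds (Hb c - Real.log 2)) := by
  obtain ⟨hc0, hc1⟩ := hc
  have hq1 : (0:ℝ) < q - 1 := by linarith
  set a : ℝ := (q - 1) * θ with ha_def
  have ha : 0 ≤ a := mul_nonneg hq1.le hθ
  set e : ℝ := -(1:ℝ) / (q - 1) with he_def
  have he : e ≤ 0 := by
    rw [he_def]; exact div_nonpos_of_nonpos_of_nonneg (by norm_num) hq1.le
  set kf : ℕ → ℕ := fun N => ⌊c * (N : ℝ)⌋₊ with hkf
  have hkfle : ∀ N : ℕ, kf N ≤ N := by
    intro N
    have : c * (N:ℝ) ≤ (N:ℝ) := by nlinarith [Nat.cast_nonneg (α := ℝ) N]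
    calc kf N ≤ ⌊(N:ℝ)⌋₊ := Nat.floor_mono this
      _ = N := Nat.floor_natCast N
  have hbase_pos : ∀ x : ℝ, 0 ≤ x → (0:ℝ) < 1 + a * x := by
    intro x hx; nlinarith
  have hbase_one : ∀ x : ℝ, 0 ≤ x → (1:ℝ) ≤ 1 + a * x := by
    intro x hx; nlinarith
  -- eventual basic facts
  have hev : ∀ᶠ N : ℕ in atTop, 1 ≤ kf N ∧ kf N < N := by
    have h1 : Tendsto (fun N : ℕ => c * (N:ℝ)) atTop atTop :=
      (tendsto_natCast_atTop_atTop (R := ℝ)).const_mul_atTop hc0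
    filter_upwards [h1.eventually_ge_atTop 1, eventually_ge_atTop 1] with N hN1 hN2
    constructor
    · exact Nat.le_floor (by exact_mod_cast hN1)
    · have hNpos : (0:ℝ) < N := by exact_mod_cast hN2
      have : (kf N : ℝ) < N := by
        calc (kf N : ℝ) ≤ c * N := Nat.floor_le (by positivity)
          _ < N := by nlinarith
      exact_mod_cast this
  -- T1
  have hratio : Tendsto (fun N : ℕ => ((kf N : ℝ)) / N) atTop (nhds c) :=
    (tendsto_nat_floor_mul_div_atTop hc0.le).comp tendsto_natCast_atTop_atTop
  have hHbcont : ContinuousAt Hb c := by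
    have h1 : ContinuousAt (fun x : ℝ => -(x * Real.log x)) c :=
      ((continuousAt_id.mul (Real.continuousAt_log hc0.ne'))).neg
    have h2 : ContinuousAt (fun x : ℝ => (1 - x) * Real.log (1 - x)) c := by
      have hl : ContinuousAt (fun x : ℝ => Real.log (1 - x)) c :=
        (Real.continuousAt_log (by intro h; linarith)).comp
          (continuousAt_const.sub continuousAt_id)
      exact (continuousAt_const.sub continuousAt_id).mul hl
    exact h1.sub h2
  have hA : Tendsto (fun N : ℕ => Hb ((kf N : ℝ) / N)) atTop (nhds (Hb c)) :=
    (hHbcont.tendsto).comp hratio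
  have hlogN1 : Tendsto (fun N : ℕ => Real.log ((N:ℝ) + 1) / N) atTop (nhds 0) := by
    have := helper_log 1 zero_le_one
    refine this.congr fun N => ?_
    rw [one_mul, add_comm]
  have T1 : Tendsto (fun N : ℕ => Real.log ((N.choose (kf N) : ℕ) : ℝ) / N) atTop
      (nhds (Hb c)) := by
    have hlow : Tendsto (fun N : ℕ => Hb ((kf N : ℝ) / N) - Real.log ((N:ℝ)+1) / N) atTop
        (nhds (Hb c)) := by
      have := hA.sub hlogN1
      rwa [sub_zero] at this
    apply tendsto_of_tendsto_of_tendsto_of_le_of_le' hlow hA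
    · filter_upwards [hev] with N hN
      have hNpos : (0:ℝ) < N := by
        have : 0 < N := lt_of_le_of_lt (Nat.zero_le _) hN.2
        exact_mod_cast this
      have B := (log_choose_bounds N (kf N) hN.1 hN.2).2
      rw [sub_le_iff_le_add, ← add_div, le_div_iff₀ hNpos]
      nlinarith [B]
    · filter_upwards [hev] with N hN
      have hNpos : (0:ℝ) < N := by
        have : 0 < N := lt_of_le_of_lt (Nat.zero_le _) hN.2
        exact_mod_cast this
      have B := (log_choose_bounds N (kf N) hN.1 hN.2).1
      rw [div_le_iff₀ hNpos]
      nlinarith [B]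
  -- T2
  have T2 : Tendsto (fun N : ℕ => Real.log ((1 + a * (kf N : ℝ)) ^ e) / N) atTop (nhds 0) := by
    have hlow : Tendsto (fun N : ℕ => e * (Real.log (1 + a * (N:ℝ)) / N)) atTop (nhds 0) := by
      simpa using (helper_log a ha).const_mul e
    apply tendsto_of_tendsto_of_tendsto_of_le_of_le' hlow tendsto_const_nhds
    · filter_upwards [eventually_ge_atTop 1] with N hN1
      have hNpos : (0:ℝ) < N := by exact_mod_cast hN1
      have hk0 : (0:ℝ) ≤ (kf N : ℝ) := Nat.cast_nonneg _
      rw [Real.log_rpow (hbase_pos _ hk0)]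
      have hkc : (kf N : ℝ) ≤ N := by exact_mod_cast hkfle N
      have hle : Real.log (1 + a * (kf N:ℝ)) ≤ Real.log (1 + a * N) :=
        Real.log_le_log (hbase_pos _ hk0) (by nlinarith)
      have hmul : e * Real.log (1 + a * (N:ℝ)) ≤ e * Real.log (1 + a * (kf N:ℝ)) :=
        mul_le_mul_of_nonpos_left hle he
      rw [mul_div_assoc, ← mul_div_assoc, ← mul_div_assoc]
      exact (div_le_div_iff_of_pos_right hNpos).mpr hmul
    · filter_upwards [eventually_ge_atTop 1] with N hN1
      have hNpos : (0:ℝ) < N := by exact_mod_cast hN1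
      have hk0 : (0:ℝ) ≤ (kf N : ℝ) := Nat.cast_nonneg _
      rw [Real.log_rpow (hbase_pos _ hk0)]
      apply div_nonpos_of_nonpos_of_nonneg _ hNpos.le
      exact mul_nonpos_of_nonpos_of_nonneg he (Real.log_nonneg (hbase_one _ hk0))
  -- T3
  set Z : ℕ → ℝ := fun N => ∑ k ∈ range (N+1), (N.choose k : ℝ) * (1 + a*(k:ℝ)) ^ e with hZ
  have hZpos : ∀ N, 0 < Z N := by
    intro N
    apply Finset.sum_pos _ ⟨0, mem_range.mpr (Nat.succ_pos N)⟩
    intro k hk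
    rw [mem_range] at hk
    have hkN : k ≤ N := by omega
    exact mul_pos (by exact_mod_cast Nat.choose_pos hkN)
      (Real.rpow_pos_of_pos (hbase_pos _ (Nat.cast_nonneg _)) e)
  have hZu : ∀ N, Z N ≤ 2 ^ N := by
    intro N
    calc Z N ≤ ∑ k ∈ range (N+1), (N.choose k : ℝ) * 1 := by
          apply Finset.sum_le_sum
          intro k _
          exact mul_le_mul_of_nonneg_left
            (Real.rpow_le_one_of_one_le_of_nonpos (hbase_one _ (Nat.cast_nonneg _)) he)
            (Nat.cast_nonneg _)
      _ = 2 ^ N := by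
          simp only [mul_one]
          exact_mod_cast congrArg (Nat.cast : ℕ → ℝ) (Nat.sum_range_choose N)
  have hZl : ∀ N, (2:ℝ) ^ N * (1 + a * N) ^ e ≤ Z N := by
    intro N
    have hs : (∑ k ∈ range (N+1), (N.choose k : ℝ)) = 2 ^ N := by
      exact_mod_cast congrArg (Nat.cast : ℕ → ℝ) (Nat.sum_range_choose N)
    calc (2:ℝ) ^ N * (1 + a * N) ^ e
        = ∑ k ∈ range (N+1), (N.choose k : ℝ) * (1 + a * N) ^ e := by
          rw [← Finset.sum_mul, hs]
      _ ≤ Z N := by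
          apply Finset.sum_le_sum
          intro k hk
          rw [mem_range] at hk
          have hkN : (k:ℝ) ≤ N := by exact_mod_cast (by omega : k ≤ N)
          apply mul_le_mul_of_nonneg_left _ (Nat.cast_nonneg _)
          exact Real.rpow_le_rpow_of_nonpos (hbase_pos _ (Nat.cast_nonneg _)) (by nlinarith) he
  have T3 : Tendsto (fun N : ℕ => Real.log (Z N) / N) atTop (nhds (Real.log 2)) := by
    have hlow : Tendsto (fun N : ℕ => Real.log 2 + e * (Real.log (1 + a * (N:ℝ)) / N)) atTop
        (nhds (Real.log 2)) := by
      have := ((helper_log a ha).const_mul e).const_add (Real.log 2)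
      simpa using this
    apply tendsto_of_tendsto_of_tendsto_of_le_of_le' hlow tendsto_const_nhds
    · filter_upwards [eventually_ge_atTop 1] with N hN1
      have hNpos : (0:ℝ) < N := by exact_mod_cast hN1
      have hb : (0:ℝ) < 1 + a * N := hbase_pos _ (Nat.cast_nonneg _)
      have hE : Real.log ((2:ℝ) ^ N * (1 + a * N) ^ e)
          = N * Real.log 2 + e * Real.log (1 + a * N) := by
        rw [Real.log_mul (by positivity) (Real.rpow_pos_of_pos hb e).ne',
          Real.log_pow, Real.log_rpow hb]
      have hmono : Real.log ((2:ℝ) ^ N * (1 + a * N) ^ e) ≤ Real.log (Z N) :=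
        Real.log_le_log (by positivity) (hZl N)
      rw [hE] at hmono
      rw [le_div_iff₀ hNpos]
      have : (Real.log 2 + e * (Real.log (1 + a * ↑N) / ↑N)) * ↑N
          = ↑N * Real.log 2 + e * Real.log (1 + a * ↑N) := by
        field_simp
      rw [this]
      exact hmono
    · filter_upwards [eventually_ge_atTop 1] with N hN1
      have hNpos : (0:ℝ) < N := by exact_mod_cast hN1
      have hmono : Real.log (Z N) ≤ Real.log ((2:ℝ) ^ N) :=
        Real.log_le_log (hZpos N) (hZu N)
      rw [Real.log_pow] at hmono
      rw [div_le_iff₀ hNpos]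
      linarith [hmono]
  -- assembly
  have key := (T1.add T2).sub T3
  rw [add_zero] at key
  refine Tendsto.congr' ?_ key
  filter_upwards [eventually_ge_atTop 1] with N hN1
  have hC : (0:ℝ) < ((N.choose (kf N) : ℕ) : ℝ) := by
    exact_mod_cast Nat.choose_pos (hkfle N)
  have hw : (0:ℝ) < (1 + a * (kf N : ℝ)) ^ e :=
    Real.rpow_pos_of_pos (hbase_pos _ (Nat.cast_nonneg _)) e
  show Real.log ((N.choose (kf N) : ℕ) : ℝ) / N + Real.log ((1 + a * (kf N:ℝ)) ^ e) / N
      - Real.log (Z N) / N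
      = (1 / (N:ℝ)) * Real.log (((N.choose (kf N) : ℕ) : ℝ) * (1 + a * (kf N:ℝ)) ^ e / Z N)
  rw [Real.log_div (mul_pos hC hw).ne' (hZpos N).ne', Real.log_mul hC.ne' hw.ne']
  ring
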